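/- Let m, d_r, d_c be integers with 1 ≤ d_c ≤ m and 1 ≤ d_r ≤ n, where n = m + d_r − d_c, and let Ω be the set of (m+1)×(n+1) 0/1 matrices with row sums (1,…,1,d_r) and column sums (1,…,1,d_c), where the column of sum d_c is the last column. Then the probability that a uniformly random matrix from Ω has a 1 in row m+1 of column 1 equals ( d_r(n−d_r+1) + d_c·d_r·(d_r−1) ) / ( n(n−d_r+1) + n·d_c·d_r ). -/

import Mathlib

open Finset

namespace SISBCT

/-- A 0/1 table with `M` rows and `N` columns, represented as a Boolean matrix. -/
abbrev Table (M N : ℕ) := Fin M → Fin N → Bool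

/-- The sum of the entries in row `i`. -/
def rowSum {M N : ℕ} (T : Table M N) (i : Fin M) : ℕ := ∑ j, (T i j).toNat

/-- The sum of the entries in column `j`. -/
def colSum {M N : ℕ} (T : Table M N) (j : Fin N) : ℕ := ∑ i, (T i j).toNat

/-- `Ω_{r,c}`: the set of 0/1 tables with row sums `r` and column sums `c`. -/
def tables {M N : ℕ} (r : Fin M → ℕ) (c : Fin N → ℕ) : Finset (Table M N) :=
  Finset.univ.filter fun T => (∀ i, rowSum T i = r i) ∧ (∀ j, colSum T j = c j)

/-- The vector `(1,…,1,d)` on `m+1` coordinates (the last coordinate equals `d`). -/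
def onesVec (m d : ℕ) : Fin (m + 1) → ℕ := fun i => if i = Fin.last m then d else 1

abbrev PSpace (m n : ℕ) := Σ p : Finset (Fin m) × Finset (Fin n), {x // x ∈ p.1ᶜ} ≃ {x // x ∈ p.2ᶜ}

instance (m n : ℕ) : DecidableEq (PSpace m n) := fun x y => by
  unfold PSpace; exact Sigma.instDecidableEqSigma x y

def Param (m n k l : ℕ) : Finset (PSpace m n) :=
  ((univ.powersetCard k) ×ˢ (univ.powersetCard l)).sigma (fun _ => univ)

lemma mem_Param {m n k l : ℕ} (x : PSpace m n) :
    x ∈ Param m n k l ↔ x.1.1.card = k ∧ x.1.2.card = l := by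
  obtain ⟨p, σ⟩ := x
  rw [Param, Finset.mem_sigma]
  simp [Finset.mem_product, mem_powersetCard_univ]

lemma card_Param {m n k l : ℕ} (hkm : k ≤ m) (h : m - k = n - l) (hln : l ≤ n) :
    (Param m n k l).card = m.choose k * n.choose l * Nat.factorial (m - k) := by
  rw [Param, Finset.card_sigma]
  have key : ∀ p ∈ ((univ.powersetCard k : Finset (Finset (Fin m))) ×ˢ (univ.powersetCard l : Finset (Finset (Fin n)))),
      (univ : Finset ({x // x ∈ p.1ᶜ} ≃ {x // x ∈ p.2ᶜ})).card = Nat.factorial (m - k) := by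
    intro p hp
    simp only [Finset.mem_product, mem_powersetCard_univ] at hp
    rw [Finset.card_univ, Fintype.card_equiv (Fintype.equivOfCardEq ?_)]
    · simp [Finset.card_compl, hp.1]
    · simp [Finset.card_compl, hp.1, hp.2, h]
  rw [Finset.sum_congr rfl key, Finset.sum_const, smul_eq_mul,
    Finset.card_product, Finset.card_powersetCard, Finset.card_powersetCard]
  simp [Finset.card_univ, Nat.mul_comm]

variable {m n : ℕ}

def decode (b : Bool) (x : PSpace m n) : Table (m+1) (n+1) := fun i j =>
  if hi : i = Fin.last m then
    if hj : j = Fin.last n then b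
    else decide (j.castPred hj ∈ x.1.2)
  else
    if hj : j = Fin.last n then decide (i.castPred hi ∈ x.1.1)
    else
      if hA : i.castPred hi ∈ x.1.1 then false
      else decide (((x.2 ⟨i.castPred hi, Finset.mem_compl.mpr hA⟩ : {y // y ∈ x.1.2ᶜ}) : Fin n) = j.castPred hj)

lemma decode_last_last (b : Bool) (x : PSpace m n) :
    decode b x (Fin.last m) (Fin.last n) = b := by simp [decode]

lemma decode_last_light (b : Bool) (x : PSpace m n) (j : Fin n) :
    decode b x (Fin.last m) j.castSucc = decide (j ∈ x.1.2) := by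
  simp [decode, (Fin.castSucc_lt_last j).ne]
  rfl

lemma decode_light_last (b : Bool) (x : PSpace m n) (i : Fin m) :
    decode b x i.castSucc (Fin.last n) = decide (i ∈ x.1.1) := by
  simp [decode, (Fin.castSucc_lt_last i).ne]
  rfl

lemma decode_light_light (b : Bool) (x : PSpace m n) (i : Fin m) (j : Fin n) :
    decode b x i.castSucc j.castSucc =
      if hA : i ∈ x.1.1 then false
      else decide (((x.2 ⟨i, Finset.mem_compl.mpr hA⟩ : {y // y ∈ x.1.2ᶜ}) : Fin n) = j) := by
  simp [decode, (Fin.castSucc_lt_last i).ne, (Fin.castSucc_lt_last j).ne]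
  rfl

lemma sum_decide_mem (s : Finset (Fin n)) : ∑ j, (decide (j ∈ s)).toNat = s.card := by
  rw [show s.card = (univ.filter (· ∈ s)).card by simp [Finset.filter_univ_mem], Finset.card_filter]
  exact Finset.sum_congr rfl fun j _ => by by_cases h : j ∈ s <;> simp [h]

lemma rowSum_decode_last (b : Bool) (x : PSpace m n) :
    rowSum (decode b x) (Fin.last m) = x.1.2.card + b.toNat := by
  rw [rowSum, Fin.sum_univ_castSucc, decode_last_last]
  congr 1
  rw [← sum_decide_mem x.1.2]
  exact Finset.sum_congr rfl fun j _ => by rw [decode_last_light]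

lemma colSum_decode_last (b : Bool) (x : PSpace m n) :
    colSum (decode b x) (Fin.last n) = x.1.1.card + b.toNat := by
  rw [colSum, Fin.sum_univ_castSucc, decode_last_last]
  congr 1
  rw [show x.1.1.card = ∑ i, (decide (i ∈ x.1.1)).toNat from (sum_decide_mem _).symm]
  exact Finset.sum_congr rfl fun i _ => by rw [decode_light_last]

lemma rowSum_decode_light (b : Bool) (x : PSpace m n) (i : Fin m) :
    rowSum (decode b x) i.castSucc = 1 := by
  rw [rowSum, Fin.sum_univ_castSucc, decode_light_last]
  by_cases hA : i ∈ x.1.1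
  · simp only [hA, decide_true]
    rw [Finset.sum_eq_zero fun j _ => by rw [decode_light_light]; simp [hA]]
    rfl
  · simp only [hA, decide_false]
    have hv : ∀ j, decode b x i.castSucc j.castSucc
        = decide (((x.2 ⟨i, Finset.mem_compl.mpr hA⟩ : {y // y ∈ x.1.2ᶜ}) : Fin n) = j) :=
      fun j => by rw [decode_light_light, dif_neg hA]
    rw [Finset.sum_congr rfl fun j _ => by rw [hv j]]
    set v := ((x.2 ⟨i, Finset.mem_compl.mpr hA⟩ : {y // y ∈ x.1.2ᶜ}) : Fin n)
    rw [show (∑ j, (decide (v = j)).toNat) = ∑ j, if j = v then 1 else 0 from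
      Finset.sum_congr rfl fun j _ => by by_cases h : v = j <;> simp [h, eq_comm (a := j)]]
    simp
lemma colSum_decode_light (b : Bool) (x : PSpace m n) (j : Fin n) :
    colSum (decode b x) j.castSucc = 1 := by
  rw [colSum, Fin.sum_univ_castSucc, decode_last_light]
  by_cases hB : j ∈ x.1.2
  · rw [Finset.sum_eq_zero fun i _ => ?_]
    · simp [hB]
    · rw [decode_light_light]
      split_ifs with hA
      · rfl
      · have hv := (x.2 ⟨i, Finset.mem_compl.mpr hA⟩).2
        rw [Finset.mem_compl] at hv
        simp [show ((x.2 ⟨i, Finset.mem_compl.mpr hA⟩ : {y // y ∈ x.1.2ᶜ}) : Fin n) ≠ j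
          from fun h => hv (h ▸ hB)]
  · simp only [hB, decide_false, Bool.toNat_false, add_zero]
    set istar := ((x.2.symm ⟨j, Finset.mem_compl.mpr hB⟩ : {y // y ∈ x.1.1ᶜ}) : Fin m) with histar
    have histar' : istar ∉ x.1.1 :=
      Finset.mem_compl.mp (x.2.symm ⟨j, Finset.mem_compl.mpr hB⟩).2
    rw [Finset.sum_congr rfl (fun i _ => ?_), Finset.sum_ite_eq' univ istar (fun _ => 1)]
    · simp
    · show (decode b x i.castSucc j.castSucc).toNat = if i = istar then 1 else 0
      rw [decode_light_light]
      split_ifs with hA hi hi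
      · exact absurd (hi ▸ hA) histar'
      · rfl
      · have : x.2 ⟨i, Finset.mem_compl.mpr hA⟩ = ⟨j, Finset.mem_compl.mpr hB⟩ := by
          rw [← Equiv.eq_symm_apply]
          exact Subtype.ext hi
        simp [Subtype.ext_iff.mp this]
      · have : ((x.2 ⟨i, Finset.mem_compl.mpr hA⟩ : {y // y ∈ x.1.2ᶜ}) : Fin n) ≠ j := by
          intro h
          apply hi
          have : x.2 ⟨i, Finset.mem_compl.mpr hA⟩ = ⟨j, Finset.mem_compl.mpr hB⟩ := Subtype.ext h
          have := congrArg x.2.symm this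
          rw [Equiv.symm_apply_apply] at this
          exact Subtype.ext_iff.mp this
        simp [this]

lemma decode_injective (b : Bool) (x x' : PSpace m n) (h : decode b x = decode b x') : x = x' := by
  obtain ⟨⟨A, B⟩, σ⟩ := x
  obtain ⟨⟨A', B'⟩, σ'⟩ := x'
  have hB : B = B' := by
    ext j
    have := congrFun (congrFun h (Fin.last m)) j.castSucc
    rw [decode_last_light, decode_last_light] at this
    simpa using this
  have hA : A = A' := by
    ext i
    have := congrFun (congrFun h i.castSucc) (Fin.last n)
    rw [decode_light_last, decode_light_last] at this
    simpa using this
  subst hA; subst hB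
  suffices hσ : σ = σ' by rw [hσ]
  apply Equiv.ext
  rintro ⟨i, hi⟩
  have hA : i ∉ A := Finset.mem_compl.mp hi
  apply Subtype.ext
  have := congrFun (congrFun h i.castSucc) ((σ ⟨i, hi⟩ : {y // y ∈ Bᶜ}) : Fin n).castSucc
  rw [decode_light_light, decode_light_light, dif_neg hA, dif_neg hA] at this
  simp only [decide_eq_decide] at this
  have h1 : ((σ ⟨i, Finset.mem_compl.mpr hA⟩ : {y // y ∈ Bᶜ}) : Fin n)
      = ((σ ⟨i, hi⟩ : {y // y ∈ Bᶜ}) : Fin n) := rfl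
  have h2 : ((σ' ⟨i, Finset.mem_compl.mpr hA⟩ : {y // y ∈ Bᶜ}) : Fin n)
      = ((σ' ⟨i, hi⟩ : {y // y ∈ Bᶜ}) : Fin n) := rfl
  rw [h1, h2] at this
  exact (this.mp trivial).symm


lemma rowSum_eq_card {M N : ℕ} (T : Table M N) (i : Fin M) :
    rowSum T i = (univ.filter (fun j => T i j = true)).card := by
  rw [rowSum, Finset.card_filter]
  exact Finset.sum_congr rfl fun j _ => by cases h : T i j <;> simp [h]

lemma colSum_eq_card {M N : ℕ} (T : Table M N) (j : Fin N) :
    colSum T j = (univ.filter (fun i => T i j = true)).card := by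
  rw [colSum, Finset.card_filter]
  exact Finset.sum_congr rfl fun i _ => by cases h : T i j <;> simp [h]

lemma sum_toNat_eq {M : ℕ} (f : Fin M → Bool) :
    ∑ i, (f i).toNat = (univ.filter (fun i => f i = true)).card := by
  rw [Finset.card_filter]
  exact Finset.sum_congr rfl fun i _ => by cases h : f i <;> simp [h]

lemma decode_surjective (b : Bool) (dr dc : ℕ) (hmn : n + dc = m + dr)
    (T : Table (m+1) (n+1))
    (hrow : ∀ i, rowSum T i = onesVec m dr i)
    (hcol : ∀ j, colSum T j = onesVec n dc j)
    (hT : T (Fin.last m) (Fin.last n) = b) :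
    ∃ x : PSpace m n, x.1.1.card + b.toNat = dc ∧ x.1.2.card + b.toNat = dr ∧ decode b x = T := by
  classical
  set A : Finset (Fin m) := univ.filter (fun i => T i.castSucc (Fin.last n) = true) with hAdef
  set B : Finset (Fin n) := univ.filter (fun j => T (Fin.last m) j.castSucc = true) with hBdef
  have hAcard : A.card + b.toNat = dc := by
    have h1 := hcol (Fin.last n)
    rw [colSum, Fin.sum_univ_castSucc, sum_toNat_eq, hT] at h1
    simpa [onesVec] using h1
  have hBcard : B.card + b.toNat = dr := by
    have h1 := hrow (Fin.last m)
    rw [rowSum, Fin.sum_univ_castSucc, sum_toNat_eq, hT] at h1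
    simpa [onesVec] using h1
  -- unique 1 in each light row
  have hR : ∀ i : Fin m, (univ.filter (fun j => T i.castSucc j = true)).card = 1 := by
    intro i
    rw [← rowSum_eq_card, hrow]
    simp [onesVec, (Fin.castSucc_lt_last i).ne]
  have hR1 : ∀ i : Fin m, ∃ j, univ.filter (fun j => T i.castSucc j = true) = {j} :=
    fun i => Finset.card_eq_one.mp (hR i)
  choose jj hjj using hR1
  have hTj : ∀ (i : Fin m) (j : Fin (n+1)), T i.castSucc j = true ↔ j = jj i := by
    intro i j
    have := Finset.ext_iff.mp (hjj i) j
    simpa using this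
  -- column uniqueness for light columns
  have hC : ∀ j : Fin n, (univ.filter (fun i => T i j.castSucc = true)).card = 1 := by
    intro j
    rw [← colSum_eq_card, hcol]
    simp [onesVec, (Fin.castSucc_lt_last j).ne]
  have colUnique : ∀ (j : Fin n) (a a' : Fin (m+1)),
      T a j.castSucc = true → T a' j.castSucc = true → a = a' := by
    intro j a a' ha ha'
    by_contra hne
    have hsub : ({a, a'} : Finset (Fin (m+1))) ⊆ univ.filter (fun i => T i j.castSucc = true) := by
      intro z hz
      simp only [Finset.mem_insert, Finset.mem_singleton] at hz
      rcases hz with rfl | rfl <;> simp [ha, ha']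
    have := Finset.card_le_card hsub
    rw [hC j, Finset.card_pair hne] at this
    omega
  -- the bijection
  have key : ∀ i : {y // y ∈ Aᶜ}, ∃ j : Fin n, j ∉ B ∧ jj i.1 = j.castSucc := by
    rintro ⟨i, hi⟩
    have hA : i ∉ A := Finset.mem_compl.mp hi
    have hfalse : T i.castSucc (Fin.last n) = false := by
      rcases Bool.eq_false_or_eq_true (T i.castSucc (Fin.last n)) with h | h
      · exact absurd (by simpa [hAdef] using h) hA
      · exact h
    have htrue : T i.castSucc (jj i) = true := (hTj i (jj i)).mpr rfl
    have hne : jj i ≠ Fin.last n := fun h => by rw [h, hfalse] at htrue; exact Bool.false_ne_true htrue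
    refine ⟨(jj i).castPred hne, fun hB' => ?_, (Fin.castSucc_castPred _ hne).symm⟩
    have h2 : T (Fin.last m) ((jj i).castPred hne).castSucc = true := by
      simpa [hBdef] using hB'
    have h3 : T i.castSucc ((jj i).castPred hne).castSucc = true := by
      rwa [Fin.castSucc_castPred]
    exact absurd (colUnique _ _ _ h3 h2) (Fin.castSucc_lt_last i).ne
  choose gg hgg1 hgg2 using key
  have hginj : Function.Injective (fun i : {y // y ∈ Aᶜ} => (⟨gg i, Finset.mem_compl.mpr (hgg1 i)⟩ : {y // y ∈ Bᶜ})) := by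
    rintro i i' hii
    have hgg : gg i = gg i' := Subtype.ext_iff.mp hii
    have h1 : T i.1.castSucc (gg i).castSucc = true := by
      rw [← hgg2 i]; exact (hTj _ _).mpr rfl
    have h2 : T i'.1.castSucc (gg i).castSucc = true := by
      rw [hgg, ← hgg2 i']; exact (hTj _ _).mpr rfl
    exact Subtype.ext (Fin.castSucc_injective _ (colUnique _ _ _ h1 h2))
  have hAm : A.card ≤ m := by simpa using Finset.card_le_univ A
  have hBn : B.card ≤ n := by simpa using Finset.card_le_univ B
  have hcards : Fintype.card {y // y ∈ Aᶜ} = Fintype.card {y // y ∈ Bᶜ} := by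
    simp only [Fintype.card_coe, Finset.card_compl, Fintype.card_fin]
    omega
  have hgbij := (Fintype.bijective_iff_injective_and_card _).mpr ⟨hginj, hcards⟩
  refine ⟨⟨(A, B), Equiv.ofBijective _ hgbij⟩, hAcard, hBcard, ?_⟩
  funext i j
  induction i using Fin.lastCases with
  | last =>
    induction j using Fin.lastCases with
    | last => rw [decode_last_last, hT]
    | cast j0 =>
      rw [decode_last_light]
      cases h : T (Fin.last m) j0.castSucc <;> simp [hBdef, h]
  | cast i0 =>
    induction j using Fin.lastCases with
    | last =>
      rw [decode_light_last]
      cases h : T i0.castSucc (Fin.last n) <;> simp [hAdef, h]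
    | cast j0 =>
      rw [decode_light_light]
      split_ifs with hA
      · have h1 : T i0.castSucc (Fin.last n) = true := by simpa [hAdef] using hA
        have h2 : Fin.last n = jj i0 := (hTj i0 _).mp h1
        cases h : T i0.castSucc j0.castSucc
        · rfl
        · exact absurd ((hTj _ _).mp h ▸ h2.symm ▸ (Fin.castSucc_lt_last j0).ne) (by simp)
      · have e1 : ((Equiv.ofBijective _ hgbij ⟨i0, Finset.mem_compl.mpr hA⟩ : {y // y ∈ Bᶜ}) : Fin n)
            = gg ⟨i0, Finset.mem_compl.mpr hA⟩ := rfl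
        rw [e1]
        have e2 := hgg2 ⟨i0, Finset.mem_compl.mpr hA⟩
        cases h : T i0.castSucc j0.castSucc
        · have hne : gg ⟨i0, Finset.mem_compl.mpr hA⟩ ≠ j0 := by
            intro hc
            have : T i0.castSucc j0.castSucc = true := by
              rw [(hTj _ _)]
              rw [e2, hc]
            rw [h] at this
            exact Bool.false_ne_true this
          simp [hne]
        · have : j0.castSucc = jj i0 := (hTj _ _).mp h
          rw [e2] at this
          have := Fin.castSucc_injective _ this.symm
          simp [this]

lemma mem_tables {m n : ℕ} (dr dc : ℕ) (T : Table (m+1) (n+1)) :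
    T ∈ tables (onesVec m dr) (onesVec n dc)
      ↔ (∀ i, rowSum T i = onesVec m dr i) ∧ (∀ j, colSum T j = onesVec n dc j) := by
  simp [tables]

lemma decode_mem_tables {m n : ℕ} (b : Bool) (dr dc : ℕ) (x : PSpace m n)
    (h1 : x.1.1.card + b.toNat = dc) (h2 : x.1.2.card + b.toNat = dr) :
    decode b x ∈ tables (onesVec m dr) (onesVec n dc) := by
  rw [mem_tables]
  constructor
  · intro i
    induction i using Fin.lastCases with
    | last => rw [rowSum_decode_last, h2]; simp [onesVec]
    | cast i0 => rw [rowSum_decode_light]; simp [onesVec, (Fin.castSucc_lt_last i0).ne]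
  · intro j
    induction j using Fin.lastCases with
    | last => rw [colSum_decode_last, h1]; simp [onesVec]
    | cast j0 => rw [colSum_decode_light]; simp [onesVec, (Fin.castSucc_lt_last j0).ne]

/-- The main bijection, in filtered-cardinality form. -/
lemma card_filter_eq {m n : ℕ} (b : Bool) (dr dc : ℕ) (hmn : n + dc = m + dr)
    (hbdc : b.toNat ≤ dc) (hbdr : b.toNat ≤ dr)
    (P : Table (m+1) (n+1) → Prop) [DecidablePred P] :
    (((tables (onesVec m dr) (onesVec n dc)).filter
        (fun T => T (Fin.last m) (Fin.last n) = b ∧ P T)).card)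
      = ((Param m n (dc - b.toNat) (dr - b.toNat)).filter
          (fun x => P (decode b x))).card := by
  classical
  symm
  apply Finset.card_bij (fun x _ => decode b x)
  · intro x hx
    rw [Finset.mem_filter] at hx
    rw [mem_Param] at hx
    rw [Finset.mem_filter]
    refine ⟨decode_mem_tables b dr dc x (by omega) (by omega), ?_, hx.2⟩
    exact decode_last_last b x
  · intro x _ x' _ h
    exact decode_injective b x x' h
  · intro T hT
    rw [Finset.mem_filter, mem_tables] at hT
    obtain ⟨⟨hrow, hcol⟩, hcorner, hP⟩ := hT
    obtain ⟨x, hx1, hx2, hx3⟩ := decode_surjective b dr dc hmn T hrow hcol hcorner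
    refine ⟨x, ?_, hx3⟩
    rw [Finset.mem_filter, mem_Param]
    exact ⟨⟨by omega, by omega⟩, by rw [hx3]; exact hP⟩

/-- Cardinality of the sigma construction over any sub-base. -/
lemma card_sigma_base {m n k l : ℕ} (h : m - k = n - l)
    (base : Finset (Finset (Fin m) × Finset (Fin n)))
    (hbase : base ⊆ (univ.powersetCard k) ×ˢ (univ.powersetCard l)) :
    (base.sigma (fun p => (univ : Finset ({x // x ∈ p.1ᶜ} ≃ {x // x ∈ p.2ᶜ})))).card
      = base.card * Nat.factorial (m - k) := by
  rw [Finset.card_sigma]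
  rw [Finset.sum_congr rfl (fun p hp => ?_), Finset.sum_const, smul_eq_mul]
  have hp' := hbase hp
  simp only [Finset.mem_product, mem_powersetCard_univ] at hp'
  rw [Finset.card_univ, Fintype.card_equiv (Fintype.equivOfCardEq ?_)]
  · simp [Finset.card_compl, hp'.1]
  · simp [Finset.card_compl, hp'.1, hp'.2, h]

lemma Param_filter_snd {m n k l : ℕ} (q : Finset (Fin n) → Prop) [DecidablePred q] :
    (Param m n k l).filter (fun x => q x.1.2)
      = (((univ.powersetCard k) ×ˢ ((univ.powersetCard l).filter q)).sigma
          (fun p => (univ : Finset ({x // x ∈ p.1ᶜ} ≃ {x // x ∈ p.2ᶜ})))) := by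
  ext ⟨p, σ⟩
  rw [Finset.mem_filter, Param, Finset.mem_sigma, Finset.mem_sigma]
  simp only [Finset.mem_product, Finset.mem_filter, Finset.mem_univ, and_true]
  tauto

lemma card_Param_filter_snd {m n k l : ℕ} (h : m - k = n - l)
    (q : Finset (Fin n) → Prop) [DecidablePred q] :
    ((Param m n k l).filter (fun x => q x.1.2)).card
      = m.choose k * ((univ.powersetCard l).filter q).card * Nat.factorial (m - k) := by
  rw [Param_filter_snd, card_sigma_base h]
  · rw [Finset.card_product, Finset.card_powersetCard]
    simp [Finset.card_univ, mul_assoc]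
  · intro p hp
    rw [Finset.mem_product] at hp ⊢
    exact ⟨hp.1, Finset.mem_of_mem_filter _ hp.2⟩

lemma card_powersetCard_filter_mem {N k : ℕ} (a : Fin N) :
    ((Finset.univ.powersetCard (k+1)).filter (fun B : Finset (Fin N) => a ∈ B)).card
      = (N-1).choose k := by
  rw [show (N-1).choose k = ((Finset.univ.erase a).powersetCard k).card by
    simp [Finset.card_powersetCard, Finset.card_erase_of_mem]]
  apply Finset.card_nbij' (fun B => B.erase a) (fun s => insert a s)
  · intro B hB
    simp only [mem_coe, mem_filter, mem_powersetCard_univ] at hB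
    rw [Finset.mem_coe, Finset.mem_powersetCard]
    constructor
    · intro x hx; simp at hx ⊢; tauto
    · rw [Finset.card_erase_of_mem hB.2, hB.1]
      omega
  · intro s hs
    rw [Finset.mem_coe, Finset.mem_powersetCard] at hs
    have ha : a ∉ s := fun h => by simpa using hs.1 h
    simp [mem_filter, mem_powersetCard_univ, Finset.card_insert_of_notMem ha, hs.2]
  · intro B hB
    simp only [mem_coe, mem_filter] at hB
    exact Finset.insert_erase hB.2
  · intro s hs
    rw [Finset.mem_coe, Finset.mem_powersetCard] at hs
    have ha : a ∉ s := fun h => by simpa using hs.1 h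
    exact Finset.erase_insert ha

lemma card_powersetCard_filter_mem_mul {N l : ℕ} (hN : 1 ≤ N) (a : Fin N) :
    ((Finset.univ.powersetCard l).filter (fun B : Finset (Fin N) => a ∈ B)).card * N
      = N.choose l * l := by
  cases l with
  | zero =>
    rw [show ((Finset.univ.powersetCard 0).filter (fun B : Finset (Fin N) => a ∈ B)) = ∅ by
      ext B; simp [Finset.mem_powersetCard]; rintro rfl; simp]
    simp
  | succ k =>
    rw [card_powersetCard_filter_mem a]
    obtain ⟨N', rfl⟩ := Nat.exists_eq_add_of_le hN
    have h := Nat.add_one_mul_choose_eq N' k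
    rw [show 1 + N' - 1 = N' from by omega, Nat.add_comm 1 N', Nat.mul_comm]
    exact h

theorem prob_one_in_corner_two_heavy_lines (m dr dc : ℕ)
    (hdc1 : 1 ≤ dc) (hdcm : dc ≤ m) (hdr1 : 1 ≤ dr) (hdrn : dr ≤ m + dr - dc) :
    (((tables (onesVec m dr) (onesVec (m + dr - dc) dc)).filter
          (fun T => T (Fin.last m) ⟨0, Nat.succ_pos _⟩ = true)).card : ℝ) /
        ((tables (onesVec m dr) (onesVec (m + dr - dc) dc)).card : ℝ)
      = ((dr : ℝ) * (((m + dr - dc : ℕ) : ℝ) - (dr : ℝ) + 1) +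
            (dc : ℝ) * (dr : ℝ) * ((dr : ℝ) - 1)) /
          (((m + dr - dc : ℕ) : ℝ) * (((m + dr - dc : ℕ) : ℝ) - (dr : ℝ) + 1) +
            ((m + dr - dc : ℕ) : ℝ) * (dc : ℝ) * (dr : ℝ)) := by
  classical
  set n := m + dr - dc with hn
  have hmn : n + dc = m + dr := by omega
  have hn1 : 1 ≤ n := le_trans hdr1 hdrn
  set a0 : Fin n := ⟨0, hn1⟩ with ha0
  set Ω := tables (onesVec m dr) (onesVec n dc) with hΩ
  set P0 : Table (m+1) (n+1) → Prop := fun T => T (Fin.last m) a0.castSucc = true with hP0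
  have hcast0 : (⟨0, Nat.succ_pos _⟩ : Fin (n+1)) = a0.castSucc := by
    apply Fin.ext; rfl
  have hcol0 : Ω.filter (fun T : Table (m+1) (n+1) => T (Fin.last m) ⟨0, Nat.succ_pos _⟩ = true)
      = Ω.filter P0 :=
    Finset.filter_congr (fun T _ => by rw [hP0, hcast0])
  -- abbreviations for the counts
  set cf := ((univ.powersetCard dr).filter (fun B : Finset (Fin n) => a0 ∈ B)).card with hcf0
  set ct := ((univ.powersetCard (dr-1)).filter (fun B : Finset (Fin n) => a0 ∈ B)).card with hct0
  set Xf := m.choose dc * n.choose dr * Nat.factorial (m - dc) with hXf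
  set Xt := m.choose (dc-1) * n.choose (dr-1) * Nat.factorial (m - (dc-1)) with hXt
  set Nf := m.choose dc * cf * Nat.factorial (m - dc) with hNf
  set Nt := m.choose (dc-1) * ct * Nat.factorial (m - (dc-1)) with hNt
  -- denominator count
  have hDb : ∀ b : Bool, (Ω.filter (fun T => T (Fin.last m) (Fin.last n) = b)).card
      = (Param m n (dc - b.toNat) (dr - b.toNat)).card := by
    intro b
    have h1 : Ω.filter (fun T : Table (m+1) (n+1) => T (Fin.last m) (Fin.last n) = b)
        = Ω.filter (fun T => T (Fin.last m) (Fin.last n) = b ∧ True) :=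
      Finset.filter_congr (fun T _ => by simp)
    rw [h1, card_filter_eq b dr dc hmn (by cases b <;> simp [hdc1]) (by cases b <;> simp [hdr1])]
    simp
  have hden : Ω.card = Xt + Xf := by
    rw [← Finset.card_filter_add_card_filter_not
      (s := Ω) (p := fun T => T (Fin.last m) (Fin.last n) = true)]
    have h2 : Ω.filter (fun T : Table (m+1) (n+1) => ¬ (T (Fin.last m) (Fin.last n) = true))
        = Ω.filter (fun T => T (Fin.last m) (Fin.last n) = false) :=
      Finset.filter_congr (fun T _ => by simp)
    rw [h2, hDb true, hDb false]
    simp only [Bool.toNat_true, Bool.toNat_false, Nat.sub_zero]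
    rw [card_Param (k := dc - 1) (l := dr - 1) (by omega) (by omega) (by omega),
      card_Param (k := dc) (l := dr) (by omega) (by omega) (by omega)]
  -- numerator count
  have hNb : ∀ b : Bool, (Ω.filter (fun T => T (Fin.last m) (Fin.last n) = b ∧ P0 T)).card
      = ((Param m n (dc - b.toNat) (dr - b.toNat)).filter (fun x => a0 ∈ x.1.2)).card := by
    intro b
    rw [card_filter_eq b dr dc hmn (by cases b <;> simp [hdc1]) (by cases b <;> simp [hdr1])]
    congr 1
    apply Finset.filter_congr
    intro x _
    simp only [hP0]
    rw [decode_last_light]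
    simp
  have hnum : (Ω.filter P0).card = Nt + Nf := by
    rw [← Finset.card_filter_add_card_filter_not
      (s := Ω.filter P0) (p := fun T => T (Fin.last m) (Fin.last n) = true)]
    rw [Finset.filter_filter, Finset.filter_filter]
    have h3 : Ω.filter (fun T : Table (m+1) (n+1) => P0 T ∧ T (Fin.last m) (Fin.last n) = true)
        = Ω.filter (fun T => T (Fin.last m) (Fin.last n) = true ∧ P0 T) :=
      Finset.filter_congr (fun T _ => and_comm)
    have h4 : Ω.filter (fun T : Table (m+1) (n+1) => P0 T ∧ ¬ (T (Fin.last m) (Fin.last n) = true))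
        = Ω.filter (fun T => T (Fin.last m) (Fin.last n) = false ∧ P0 T) :=
      Finset.filter_congr (fun T _ => by simp [and_comm])
    rw [h3, h4, hNb true, hNb false]
    simp only [Bool.toNat_true, Bool.toNat_false, Nat.sub_zero]
    rw [card_Param_filter_snd (k := dc - 1) (l := dr - 1) (q := fun B => a0 ∈ B) (by omega),
      card_Param_filter_snd (k := dc) (l := dr) (q := fun B => a0 ∈ B) (by omega)]
  -- numeric identities
  have hcf1 : cf * n = n.choose dr * dr := card_powersetCard_filter_mem_mul hn1 a0
  have hct1 : ct * n = n.choose (dr-1) * (dr-1) := card_powersetCard_filter_mem_mul hn1 a0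
  have hch1 : n.choose (dr-1) * (n - dr + 1) = n.choose dr * dr := by
    have := Nat.choose_succ_right_eq n (dr-1)
    rw [show dr - 1 + 1 = dr from by omega, show n - (dr-1) = n - dr + 1 from by omega] at this
    exact this.symm
  have hch2 : m.choose (dc-1) * (m - dc + 1) = m.choose dc * dc := by
    have := Nat.choose_succ_right_eq m (dc-1)
    rw [show dc - 1 + 1 = dc from by omega, show m - (dc-1) = m - dc + 1 from by omega] at this
    exact this.symm
  have R1 : Nf * n = dr * Xf := by
    calc Nf * n = m.choose dc * (cf * n) * Nat.factorial (m - dc) := by rw [hNf]; ring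
    _ = dr * Xf := by rw [hcf1, hXf]; ring
  have R2 : Nt * n = (dr - 1) * Xt := by
    calc Nt * n = m.choose (dc-1) * (ct * n) * Nat.factorial (m - (dc-1)) := by rw [hNt]; ring
    _ = (dr - 1) * Xt := by rw [hct1, hXt]; ring
  have hfac : Nat.factorial (m - (dc-1)) = (m - dc + 1) * Nat.factorial (m - dc) := by
    rw [show m - (dc-1) = (m - dc) + 1 from by omega, Nat.factorial_succ]
  have R3 : Xt * (n - dr + 1) = dc * dr * Xf := by
    have e : n - dr + 1 = m - dc + 1 := by omega
    calc Xt * (n - dr + 1)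
        = (m.choose (dc-1) * (m - dc + 1)) * (n.choose (dr-1) * (n - dr + 1))
            * Nat.factorial (m - dc) := by rw [hXt, hfac, e]; ring
      _ = (m.choose dc * dc) * (n.choose dr * dr) * Nat.factorial (m - dc) := by
          rw [hch1, hch2]
      _ = dc * dr * Xf := by rw [hXf]; ring
  have hXfpos : 0 < Xf := by
    rw [hXf]
    exact Nat.mul_pos (Nat.mul_pos (Nat.choose_pos hdcm) (Nat.choose_pos hdrn))
      (Nat.factorial_pos _)
  -- pass to the reals
  rw [hcol0, hnum, hden]
  have hnnr : ((n : ℝ) - dr + 1) = ((n - dr + 1 : ℕ) : ℝ) := by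
    push_cast [Nat.cast_sub hdrn]; ring
  have hdr1r : ((dr : ℝ) - 1) = ((dr - 1 : ℕ) : ℝ) := by
    push_cast [Nat.cast_sub hdr1]; ring
  have hdenpos : ((Xt : ℝ) + Xf) ≠ 0 := by positivity
  have hnpos : (0:ℝ) < n := by exact_mod_cast hn1
  have hnnpos : (0:ℝ) < ((n - dr + 1 : ℕ) : ℝ) := by
    have : 1 ≤ n - dr + 1 := by omega
    exact_mod_cast lt_of_lt_of_le zero_lt_one (by exact_mod_cast this)
  have htpos : ((n:ℝ) * ((n:ℝ) - dr + 1) + (n:ℝ) * dc * dr) ≠ 0 := by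
    rw [hnnr]; positivity
  rw [div_eq_div_iff (by positivity) htpos]
  have R1' : (Nf : ℝ) * n = dr * Xf := by exact_mod_cast R1
  have R2' : (Nt : ℝ) * n = ((dr:ℝ) - 1) * Xt := by rw [hdr1r]; exact_mod_cast R2
  have R3' : (Xt : ℝ) * ((n:ℝ) - dr + 1) = dc * dr * Xf := by rw [hnnr]; exact_mod_cast R3
  push_cast
  linear_combination (((n:ℝ) - dr + 1) + (dc:ℝ)*dr) * R1' + (((n:ℝ) - dr + 1) + (dc:ℝ)*dr) * R2' - R3'

end SISBCT
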